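/- The two-sided Thue–Morse point is Morse-type minimal in the two-sided shift: let M* : ℤ → Bool be defined by M* n = t n for n ≥ 0 and M* n = t (−n − 1) for n < 0. Then the orbit closure closure {S^k M* | k : ℤ} ⊆ (ℤ → Bool) under the two-sided shift S, (S x) n = x (n+1), is minimal (every nonempty closed S-invariant subset of it equals it) and uncountable. -/

import Mathlib

/-- The Thue–Morse sequence: `t n = true` iff the number of 1s in the
binary expansion of `n` is odd. -/
def thueMorse (n : ℕ) : Bool := (Nat.digits 2 n).count 1 % 2 == 1

/-- The two-sided Thue–Morse point `M*`: `M* n = t n` for `n ≥ 0` and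
`M* n = t (−n − 1)` for `n < 0`. -/
def twoSidedMorse (n : ℤ) : Bool :=
  if 0 ≤ n then thueMorse n.toNat else thueMorse (-n - 1).toNat

/-- The two-sided shift map. -/
def shiftZ (x : ℤ → Bool) : ℤ → Bool := fun n => x (n + 1)

def morseOrbit : Set (ℤ → Bool) :=
  {y : ℤ → Bool | ∃ k : ℤ, (fun n => twoSidedMorse (n + k)) = y}

lemma tm_two_mul (n : ℕ) : thueMorse (2*n) = thueMorse n := by
  rcases Nat.eq_zero_or_pos n with h | h
  · simp [h]
  · unfold thueMorse
    rw [Nat.digits_def' (by norm_num) (by omega)]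
    have h1 : (2*n) % 2 = 0 := by omega
    have h2 : (2*n) / 2 = n := by omega
    rw [h1, h2]; simp

lemma tm_two_mul_add_one (n : ℕ) : thueMorse (2*n+1) = !thueMorse n := by
  unfold thueMorse
  rw [Nat.digits_def' (by norm_num) (by omega)]
  have h1 : (2*n+1) % 2 = 1 := by omega
  have h2 : (2*n+1) / 2 = n := by omega
  rw [h1, h2, List.count_cons_self]
  rcases Nat.mod_two_eq_zero_or_one ((Nat.digits 2 n).count 1) with hc | hc <;>
  · have h3 : ((Nat.digits 2 n).count 1 + 1) % 2 = _ := Nat.add_mod _ 1 2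
    rw [Nat.add_mod, hc]; decide

/-- general split: value of t at even/odd argument -/

lemma tm_bit (m : ℕ) : thueMorse m = (if m % 2 = 0 then thueMorse (m/2) else !thueMorse (m/2)) := by
  rcases Nat.mod_two_eq_zero_or_one m with h | h
  · have : m = 2 * (m/2) := by omega
    rw [h]; simp only [if_pos rfl]
    conv_lhs => rw [this]
    exact tm_two_mul _
  · have : m = 2 * (m/2) + 1 := by omega
    rw [h]; simp only [if_neg one_ne_zero]
    conv_lhs => rw [this]
    exact tm_two_mul_add_one _

lemma tm_zero : thueMorse 0 = false := by simp [thueMorse]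

lemma tm_one : thueMorse 1 = true := by
  have := tm_two_mul_add_one 0
  rw [tm_zero] at this; simpa using this

/-- adding a single high bit flips the value -/

lemma tm_flip : ∀ m x : ℕ, x < 2^m → thueMorse (2^m + x) = !thueMorse x := by
  intro m
  induction m with
  | zero =>
    intro x hx
    interval_cases x
    simp [tm_one, tm_zero]
  | succ m ih =>
    intro x hx
    rcases Nat.mod_two_eq_zero_or_one x with h | h
    · obtain ⟨j, rfl⟩ : ∃ j, x = 2*j := ⟨x/2, by omega⟩
      have e : 2^(m+1) + 2*j = 2*(2^m + j) := by ring
      rw [e, tm_two_mul, tm_two_mul, ih j (by omega)]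
    · obtain ⟨j, rfl⟩ : ∃ j, x = 2*j+1 := ⟨x/2, by omega⟩
      have e : 2^(m+1) + (2*j+1) = 2*(2^m + j)+1 := by ring
      rw [e, tm_two_mul_add_one, tm_two_mul_add_one, ih j (by omega)]

/-- palindrome/complement property -/

lemma tm_rev : ∀ m x : ℕ, x < 2^m → thueMorse (2^m - 1 - x) = xor (thueMorse x) (m % 2 == 1) := by
  intro m
  induction m with
  | zero =>
    intro x hx
    interval_cases x
    simp [tm_one, tm_zero]
  | succ m ih =>
    intro x hx
    rcases Nat.mod_two_eq_zero_or_one x with h | h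
    · obtain ⟨j, rfl⟩ : ∃ j, x = 2*j := ⟨x/2, by omega⟩
      have e : 2^(m+1) - 1 - 2*j = 2*(2^m - 1 - j) + 1 := by
        have : 2^(m+1) = 2 * 2^m := by ring
        omega
      rw [e, tm_two_mul_add_one, tm_two_mul, ih j (by omega)]
      rcases Nat.mod_two_eq_zero_or_one m with h2 | h2
      · have h3 : (m+1) % 2 = 1 := by omega
        rw [h2, h3]; cases thueMorse j <;> decide
      · have h3 : (m+1) % 2 = 0 := by omega
        rw [h2, h3]; cases thueMorse j <;> decide
    · obtain ⟨j, rfl⟩ : ∃ j, x = 2*j+1 := ⟨x/2, by omega⟩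
      have e : 2^(m+1) - 1 - (2*j+1) = 2*(2^m - 1 - j) := by
        have : 2^(m+1) = 2 * 2^m := by ring
        omega
      rw [e, tm_two_mul, tm_two_mul_add_one, ih j (by omega)]
      rcases Nat.mod_two_eq_zero_or_one m with h2 | h2
      · have h3 : (m+1) % 2 = 1 := by omega
        rw [h2, h3]; cases thueMorse j <;> decide
      · have h3 : (m+1) % 2 = 0 := by omega
        rw [h2, h3]; cases thueMorse j <;> decide

lemma tm_aperiodic : ∀ p, 1 ≤ p → ∃ n, thueMorse (n+p) ≠ thueMorse n := by
  intro p
  induction p using Nat.strong_induction_on with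
  | _ p ih =>
    intro hp
    rcases Nat.mod_two_eq_zero_or_one p with h | h
    · -- p even
      obtain ⟨q, rfl⟩ : ∃ q, p = 2*q := ⟨p/2, by omega⟩
      obtain ⟨n, hn⟩ := ih q (by omega) (by omega)
      exact ⟨2*n, by rw [show 2*n+2*q = 2*(n+q) by ring, tm_two_mul, tm_two_mul]; exact hn⟩
    · -- p odd
      by_contra hcon
      push_neg at hcon
      obtain ⟨q, rfl⟩ : ∃ q, p = 2*q+1 := ⟨p/2, by omega⟩
      have eq1 : ∀ n, thueMorse n = !thueMorse (n+q) := by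
        intro n
        have h1 := hcon (2*n)
        rw [show 2*n+(2*q+1) = 2*(n+q)+1 by ring, tm_two_mul_add_one, tm_two_mul] at h1
        exact h1.symm
      have eq2 : ∀ n, (!thueMorse n) = thueMorse (n+q+1) := by
        intro n
        have h1 := hcon (2*n+1)
        rw [show 2*n+1+(2*q+1) = 2*(n+q+1) by ring, tm_two_mul, tm_two_mul_add_one] at h1
        rw [h1]
      have key : ∀ n, thueMorse (n+1) = thueMorse n := by
        intro n
        have a1 := eq1 (n+1)
        have a2 := eq2 n
        rw [show n+1+q = n+q+1 by ring, ← a2] at a1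
        rw [a1]; cases thueMorse n <;> simp
      have := key 0
      rw [tm_zero, tm_one] at this
      exact absurd this (by simp)

/-- in any window of 4 starting at m there is an adjacent pair (!x, x) -/

lemma tm_pair (m : ℕ) (x : Bool) :
    ∃ j, j ≤ 3 ∧ thueMorse (m+j) = !x ∧ thueMorse (m+j+1) = x := by
  set u := (m+1)/2 with hu
  have h2u : 2*u = m ∨ 2*u = m+1 := by omega
  have e1 : thueMorse (2*u+1) = !thueMorse u := tm_two_mul_add_one u
  have e0 : thueMorse (2*u) = thueMorse u := tm_two_mul u
  have e2 : thueMorse (2*u+2) = thueMorse (u+1) := by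
    rw [show 2*u+2 = 2*(u+1) by ring, tm_two_mul]
  have e3 : thueMorse (2*u+3) = !thueMorse (u+1) := by
    rw [show 2*u+3 = 2*(u+1)+1 by ring, tm_two_mul_add_one]
  by_cases hc : thueMorse u = x
  · by_cases hd : thueMorse (u+1) = x
    · -- pair at 2u+1
      refine ⟨2*u+1-m, by omega, ?_, ?_⟩
      · rw [show m+(2*u+1-m) = 2*u+1 by omega, e1, hc]
      · rw [show m+(2*u+1-m)+1 = 2*u+2 by omega, e2, hd]
    · refine ⟨2*u+2-m, by omega, ?_, ?_⟩
      · rw [show m+(2*u+2-m) = 2*u+2 by omega, e2]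
        cases x <;> simp_all
      · rw [show m+(2*u+2-m)+1 = 2*u+3 by omega, e3]
        cases x <;> simp_all
  · refine ⟨2*u-m, by omega, ?_, ?_⟩
    · rw [show m+(2*u-m) = 2*u by omega, e0]
      cases x <;> simp_all
    · rw [show m+(2*u-m)+1 = 2*u+1 by omega, e1]
      cases x <;> simp_all

lemma tm_double {a r m : ℕ} (h : ∀ s < m, thueMorse (r+s) = thueMorse (a+s)) :
    ∀ j < 2*m, thueMorse (2*r+j) = thueMorse (2*a+j) := by
  intro j hj
  rcases Nat.mod_two_eq_zero_or_one j with hm | hm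
  · obtain ⟨s, rfl⟩ : ∃ s, j = 2*s := ⟨j/2, by omega⟩
    rw [show 2*r+2*s = 2*(r+s) by ring, show 2*a+2*s = 2*(a+s) by ring,
      tm_two_mul, tm_two_mul, h s (by omega)]
  · obtain ⟨s, rfl⟩ : ∃ s, j = 2*s+1 := ⟨j/2, by omega⟩
    rw [show 2*r+(2*s+1) = 2*(r+s)+1 by ring, show 2*a+(2*s+1) = 2*(a+s)+1 by ring,
      tm_two_mul_add_one, tm_two_mul_add_one, h s (by omega)]

/-- uniform recurrence of the Thue–Morse sequence -/

lemma tm_ur : ∀ L, ∃ g, ∀ p q, ∃ r, q ≤ r ∧ r + L ≤ q + g ∧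
    ∀ i < L, thueMorse (r+i) = thueMorse (p+i) := by
  intro L
  induction L using Nat.strong_induction_on with
  | _ L ih =>
    by_cases hL : L ≤ 2
    · refine ⟨12, fun p q => ?_⟩
      -- find occurrence of the 2-word (t p, t (p+1)); it covers L ≤ 2
      by_cases hx : thueMorse p = thueMorse (p+1)
      · -- word (x,x): occurs at 2v+1 where (t v, t(v+1)) = (!x, x)
        set x := thueMorse (p+1) with hxdef
        obtain ⟨j, hj, h1, h2⟩ := tm_pair ((q+1)/2) x
        set v := (q+1)/2 + j with hv
        refine ⟨2*v+1, by omega, by omega, ?_⟩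
        intro i hi
        have hi2 : i ≤ 1 := by omega
        interval_cases i
        · rw [show 2*v+1+0 = 2*v+1 by ring, tm_two_mul_add_one, h1]
          simpa using hx.symm
        · rw [show 2*v+1+1 = 2*(v+1) by ring, tm_two_mul, h2, hxdef]
      · set x := thueMorse (p+1) with hxdef
        obtain ⟨j, hj, h1, h2⟩ := tm_pair q x
        refine ⟨q+j, by omega, by omega, ?_⟩
        intro i hi
        have hi2 : i ≤ 1 := by omega
        interval_cases i
        · rw [show q+j+0 = q+j by ring, h1]
          cases hh : thueMorse (p+1) <;> simp_all
        · rw [h2, hxdef]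
    · -- L ≥ 3
      set m := L/2 + 1 with hm
      obtain ⟨g', hg'⟩ := ih m (by omega)
      refine ⟨2*g' + L + 4, fun p q => ?_⟩
      obtain ⟨r', hr1, hr2, hr3⟩ := hg' (p/2) (q/2+1)
      refine ⟨2*r' + p % 2, by omega, by omega, ?_⟩
      intro i hi
      have key := tm_double hr3 (p % 2 + i) (by omega)
      rw [show 2*r' + p%2 + i = 2*r' + (p%2+i) by ring, key,
        show 2*(p/2) + (p%2+i) = p + i by omega]

lemma morse_cross (e : ℕ) (n : ℤ) (h1 : -(4^e : ℤ) ≤ n) (h2 : n < 4^e) :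
    twoSidedMorse n = thueMorse (n + 6*4^e).toNat := by
  have hN : (4:ℤ)^e = ((4^e : ℕ) : ℤ) := by push_cast; ring
  set N : ℕ := 4^e with hNdef
  have hpow : N = 2^(2*e) := by rw [hNdef]; rw [pow_mul]; norm_num
  rcases le_or_gt 0 n with hn | hn
  · obtain ⟨j, rfl⟩ : ∃ j : ℕ, n = (j:ℤ) := ⟨n.toNat, by omega⟩
    have hj : j < N := by omega
    have ht : ((j:ℤ) + 6*4^e).toNat = j + 6*N := by omega
    rw [twoSidedMorse, if_pos hn, ht, Int.toNat_natCast]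
    have e1 : j + 6*N = 2^(2*e+2) + (2^(2*e+1) + j) := by
      rw [hpow]; ring
    have e2 : 2^(2*e+1) + j < 2^(2*e+2) := by
      have : (2:ℕ)^(2*e+1) + 2^(2*e+1) = 2^(2*e+2) := by ring
      have hj2 : j < 2^(2*e+1) := by
        calc j < N := hj
        _ ≤ 2^(2*e+1) := by rw [hpow]; exact Nat.pow_le_pow_right (by norm_num) (by omega)
      omega
    rw [e1, tm_flip _ _ e2, tm_flip _ _ (by
      have : (2:ℕ)^(2*e) ≤ 2^(2*e+1) := Nat.pow_le_pow_right (by norm_num) (by omega)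
      omega : j < 2^(2*e+1))]
    simp
  · obtain ⟨j, hjn⟩ : ∃ j : ℕ, n = -(j:ℤ) - 1 := ⟨(-n-1).toNat, by omega⟩
    have hj : j < N := by omega
    have ht1 : (-n - 1).toNat = j := by omega
    have ht : (n + 6*4^e).toNat = 2^(2*e+2) + (2^(2*e) + (N - 1 - j)) := by
      have : (2:ℕ)^(2*e+2) + 2^(2*e) = 5*N := by rw [hpow]; ring
      omega
    rw [twoSidedMorse, if_neg (by omega), ht1, ht]
    have hr : N - 1 - j < 2^(2*e) := by omega
    have h5 : 2^(2*e) + (N - 1 - j) < 2^(2*e+2) := by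
      have : (2:ℕ)^(2*e) + 2^(2*e) + 2^(2*e) + 2^(2*e) = 2^(2*e+2) := by ring
      omega
    rw [tm_flip _ _ h5, tm_flip _ _ (by omega : N - 1 - j < 2^(2*e))]
    have := tm_rev (2*e) j (by omega)
    have hme : (2*e) % 2 = 0 := by omega
    rw [hme] at this
    have h9 : (2:ℕ)^(2*e) - 1 - j = N - 1 - j := by omega
    rw [h9] at this
    rw [this]
    cases thueMorse j <;> simp

lemma morse_window (a : ℤ) (L : ℕ) : ∃ k : ℕ, ∀ i : ℕ, i < L →
    twoSidedMorse (a + i) = thueMorse (k + i) := by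
  obtain ⟨e, he⟩ : ∃ e : ℕ, a.natAbs + L < 4^e := by
    refine ⟨a.natAbs + L + 1, ?_⟩
    calc a.natAbs + L < 2^(a.natAbs + L + 1) := by
          have := Nat.lt_two_pow_self (n := a.natAbs + L)
          have : (2:ℕ)^(a.natAbs+L) ≤ 2^(a.natAbs+L+1) := Nat.pow_le_pow_right (by norm_num) (by omega)
          omega
    _ ≤ 4^(a.natAbs + L + 1) := Nat.pow_le_pow_left (by norm_num) _
  have hN : ((4^e : ℕ) : ℤ) = (4:ℤ)^e := by push_cast; ring
  refine ⟨(a + 6*4^e).toNat, fun i hi => ?_⟩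
  have hb1 : -(4^e : ℤ) ≤ a + i := by omega
  have hb2 : a + i < 4^e := by omega
  rw [morse_cross e _ hb1 hb2]
  congr 1
  omega

/-- uniform recurrence for the two-sided Morse point -/

lemma morse_ur : ∀ L : ℕ, ∃ g : ℕ, ∀ a q : ℤ, ∃ r : ℤ, q ≤ r ∧ r + L ≤ q + g ∧
    ∀ i : ℕ, i < L → twoSidedMorse (r + i) = twoSidedMorse (a + i) := by
  intro L
  rcases Nat.eq_zero_or_pos L with rfl | hL
  · exact ⟨0, fun a q => ⟨q, le_refl _, by omega, fun i hi => by omega⟩⟩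
  obtain ⟨g, hg⟩ := tm_ur L
  refine ⟨g, fun a q => ?_⟩
  obtain ⟨kp, hkp⟩ := morse_window a L
  obtain ⟨k, hk⟩ := morse_window q g
  obtain ⟨r', hr1, hr2, hr3⟩ := hg kp k
  refine ⟨q + (r' - k), by omega, by omega, fun i hi => ?_⟩
  have h1 : q + ((r' : ℤ) - k) + i = q + ((r' - k + i : ℕ) : ℤ) := by omega
  rw [h1, hk _ (by omega), show k + (r' - k + i) = r' + i by omega, hr3 i hi, ← hkp i hi]

/-- closure membership via cylinders -/

lemma mem_closure_cyl (A : Set (ℤ → Bool)) (y : ℤ → Bool) :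
    y ∈ closure A ↔ ∀ L : ℕ, ∃ z ∈ A, ∀ n : ℤ, n.natAbs ≤ L → z n = y n := by
  constructor
  · intro hy L
    have hopen : IsOpen {z : ℤ → Bool | ∀ n ∈ Finset.Icc (-(L:ℤ)) L, z n = y n} := by
      have : {z : ℤ → Bool | ∀ n ∈ Finset.Icc (-(L:ℤ)) L, z n = y n}
          = Set.pi (Finset.Icc (-(L:ℤ)) L : Set ℤ) (fun n => {y n}) := by
        ext z; simp [Set.pi]
      rw [this]
      exact isOpen_set_pi (Finset.finite_toSet _) (fun a _ => isOpen_discrete _)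
    have hmem : y ∈ {z : ℤ → Bool | ∀ n ∈ Finset.Icc (-(L:ℤ)) L, z n = y n} :=
      fun n _ => rfl
    obtain ⟨z, hz1, hz2⟩ := mem_closure_iff.mp hy _ hopen hmem
    exact ⟨z, hz2, fun n hn => hz1 n (by simp; omega)⟩
  · intro h
    rw [mem_closure_iff]
    intro U hU hyU
    obtain ⟨I, u, hu, hsub⟩ := isOpen_pi_iff.mp hU y hyU
    obtain ⟨z, hzA, hz⟩ := h (I.sup Int.natAbs)
    refine ⟨z, hsub fun a ha => ?_, hzA⟩
    rw [hz a (Finset.le_sup ha)]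
    exact (hu a ha).2

lemma morse_mem_orbit : twoSidedMorse ∈ morseOrbit := ⟨0, by funext n; simp⟩

/-- characterization of points of the orbit closure -/

lemma mem_X_iff (y : ℤ → Bool) : y ∈ closure morseOrbit ↔
    ∀ L : ℕ, ∃ k : ℤ, ∀ n : ℤ, n.natAbs ≤ L → twoSidedMorse (n + k) = y n := by
  rw [mem_closure_cyl]
  constructor
  · intro h L
    obtain ⟨z, ⟨k, hk⟩, hz⟩ := h L
    exact ⟨k, fun n hn => by rw [← hz n hn, ← hk]⟩
  · intro h L
    obtain ⟨k, hk⟩ := h L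
    exact ⟨fun n => twoSidedMorse (n + k), ⟨k, rfl⟩, hk⟩

lemma shifts_mem {K : Set (ℤ → Bool)} (hK : shiftZ '' K ⊆ K) {y : ℤ → Bool} (hy : y ∈ K) :
    ∀ m : ℕ, (fun n => y (n + m)) ∈ K := by
  intro m
  induction m with
  | zero => simpa using hy
  | succ m ih =>
    have : (fun n : ℤ => y (n + ((m+1 : ℕ) : ℤ))) = shiftZ (fun n => y (n + (m:ℤ))) := by
      funext n; simp only [shiftZ]; congr 1; push_cast; ring
    rw [this]
    exact hK ⟨_, ih, rfl⟩

lemma morse_aperiodicZ (p : ℕ) (hp : 1 ≤ p)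
    (h : ∀ n : ℤ, twoSidedMorse (n + p) = twoSidedMorse n) : False := by
  obtain ⟨n, hn⟩ := tm_aperiodic p hp
  apply hn
  have := h (n : ℤ)
  rw [twoSidedMorse, twoSidedMorse, if_pos (by omega), if_pos (by omega)] at this
  have e1 : ((n:ℤ) + p).toNat = n + p := by omega
  have e2 : ((n:ℤ)).toNat = n := by omega
  rwa [e1, e2] at this

/-- two distinct orbit points agreeing with x on a window -/

lemma no_isolated {x : ℤ → Bool} (hx : x ∈ closure morseOrbit) (L : ℕ) :
    ∃ z ∈ morseOrbit, z ≠ x ∧ ∀ n : ℤ, n.natAbs ≤ L → z n = x n := by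
  obtain ⟨k, hk⟩ := (mem_X_iff x).mp hx L
  obtain ⟨g, hg⟩ := morse_ur (2*L+1)
  obtain ⟨r₁, hr₁a, hr₁b, hr₁c⟩ := hg (k - L) 0
  obtain ⟨r₂, hr₂a, hr₂b, hr₂c⟩ := hg (k - L) (g+1)
  set z₁ : ℤ → Bool := fun n => twoSidedMorse (n + (r₁ + L)) with hz₁
  set z₂ : ℤ → Bool := fun n => twoSidedMorse (n + (r₂ + L)) with hz₂
  have hagree : ∀ (r : ℤ), (∀ i : ℕ, i < 2*L+1 →
      twoSidedMorse (r + i) = twoSidedMorse (k - L + i)) →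
      ∀ n : ℤ, n.natAbs ≤ L → twoSidedMorse (n + (r + L)) = x n := by
    intro r hr n hn
    have hi : ((n + L).toNat : ℤ) = n + L := by omega
    have := hr (n + L).toNat (by omega)
    rw [hi] at this
    rw [show n + (r + L) = r + (n + L) by ring, this,
      show k - L + (n + L) = n + k by ring]
    exact hk n hn
  have ha₁ := hagree r₁ hr₁c
  have ha₂ := hagree r₂ hr₂c
  have hne : z₁ ≠ z₂ := by
    intro hcon
    apply morse_aperiodicZ (r₂ - r₁).toNat (by omega)
    intro n
    have := congrFun hcon (n - r₁ - L)
    rw [hz₁, hz₂] at this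
    simp only at this
    rw [show n - r₁ - L + (r₁ + L) = n by ring] at this
    rw [show n - r₁ - L + (r₂ + L) = n + (r₂ - r₁) by ring] at this
    rw [show ((r₂ - r₁).toNat : ℤ) = r₂ - r₁ by omega]
    exact this.symm
  by_cases h1 : z₁ = x
  · exact ⟨z₂, ⟨r₂ + L, rfl⟩, by rw [← h1]; exact hne.symm, ha₂⟩
  · exact ⟨z₁, ⟨r₁ + L, rfl⟩, h1, ha₁⟩

lemma minimality (K : Set (ℤ → Bool)) (hKX : K ⊆ closure morseOrbit)
    (hKne : K.Nonempty) (hKcl : IsClosed K) (hKinv : shiftZ '' K ⊆ K) :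
    K = closure morseOrbit := by
  obtain ⟨y₀, hy₀⟩ := hKne
  -- Step 1 : twoSidedMorse ∈ K
  have hMK : twoSidedMorse ∈ K := by
    rw [← hKcl.closure_eq]
    rw [mem_closure_cyl]
    intro L
    obtain ⟨g, hg⟩ := morse_ur (2*L+1)
    obtain ⟨k, hk⟩ := (mem_X_iff y₀).mp (hKX hy₀) (L + g)
    obtain ⟨r, hra, hrb, hrc⟩ := hg (-(L:ℤ)) (k - L)
    have hm0 : 0 ≤ r + L - k := by omega
    refine ⟨fun n => y₀ (n + (r + L - k).toNat), shifts_mem hKinv hy₀ _, fun n hn => ?_⟩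
    show y₀ (n + ((r + L - k).toNat : ℤ)) = twoSidedMorse n
    have htn : ((r + L - k).toNat : ℤ) = r + L - k := by omega
    rw [htn]
    have hb : (n + (r + L - k)).natAbs ≤ L + g := by omega
    rw [← hk _ hb]
    have hi : ((n + L).toNat : ℤ) = n + L := by omega
    have := hrc (n + L).toNat (by omega)
    rw [hi] at this
    rw [show n + (r + L - k) + k = r + (n + L) by ring, this,
      show -(L:ℤ) + (n + L) = n by ring]
  -- Step 2 : morseOrbit ⊆ K
  have hOK : morseOrbit ⊆ K := by
    rintro z ⟨k, rfl⟩
    rw [← hKcl.closure_eq, mem_closure_cyl]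
    intro L
    obtain ⟨g, hg⟩ := morse_ur (2*L+1)
    obtain ⟨r, hra, hrb, hrc⟩ := hg (k - L) 0
    refine ⟨fun n => twoSidedMorse (n + (r + L).toNat),
      shifts_mem hKinv hMK _, fun n hn => ?_⟩
    show twoSidedMorse (n + ((r + L).toNat : ℤ)) = twoSidedMorse (n + k)
    have htn : (((r+L).toNat : ℕ) : ℤ) = r + L := by omega
    rw [htn]
    have hi : ((n + L).toNat : ℤ) = n + L := by omega
    have := hrc (n + L).toNat (by omega)
    rw [hi] at this
    rw [show n + (r + L) = r + (n + L) by ring, this,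
      show k - L + (n + L) = n + k by ring]
  exact le_antisymm hKX (closure_minimal hOK hKcl)

lemma uncountable : ¬ (closure morseOrbit).Countable := by
  intro hC
  set X := closure morseOrbit with hX
  have hXcl : IsClosed X := isClosed_closure
  have hXne : twoSidedMorse ∈ X := subset_closure morse_mem_orbit
  haveI : Countable ↥X := hC.to_subtype
  haveI : Nonempty ↥X := ⟨⟨_, hXne⟩⟩
  haveI : CompactSpace ↥X := isCompact_iff_compactSpace.mp hXcl.isCompact
  haveI : BaireSpace ↥X := BaireSpace.of_t2Space_locallyCompactSpace
  obtain ⟨f, hf⟩ := exists_surjective_nat ↥X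
  have hdense : ∀ m : ℕ, Dense ({f m}ᶜ : Set ↥X) := by
    intro m
    rw [dense_compl_singleton_iff_not_open]
    intro hopen
    obtain ⟨V, hV, hVeq⟩ := isOpen_induced_iff.mp hopen
    obtain ⟨I, u, hu, hsub⟩ := isOpen_pi_iff.mp hV (f m).1 (by
      have : f m ∈ Subtype.val ⁻¹' V := hVeq ▸ rfl
      exact this)
    obtain ⟨z, hzO, hzne, hzag⟩ := no_isolated (f m).2 (I.sup Int.natAbs)
    have hzV : z ∈ V := hsub fun a ha => by
      rw [hzag a (Finset.le_sup ha)]; exact (hu a ha).2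
    have : (⟨z, subset_closure hzO⟩ : ↥X) ∈ Subtype.val ⁻¹' V := hzV
    rw [hVeq] at this
    exact hzne (congrArg Subtype.val this)
  have hBaire : Dense (⋂ m, ({f m}ᶜ : Set ↥X)) :=
    dense_iInter_of_isOpen (fun m => isOpen_compl_singleton) hdense
  obtain ⟨x, hx⟩ := hBaire.nonempty
  obtain ⟨m, rfl⟩ := hf x
  exact (Set.mem_iInter.mp hx m) rfl

/-- The two-sided Thue–Morse point is a Morse-type minimal point in the
two-sided binary shift: its orbit closure (over all integer shifts) is
minimal and uncountable. -/
theorem twoSidedMorse_morseTypeMinimal :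
    (∀ K : Set (ℤ → Bool),
        K ⊆ closure {y : ℤ → Bool | ∃ k : ℤ, (fun n => twoSidedMorse (n + k)) = y} →
        K.Nonempty → IsClosed K → shiftZ '' K ⊆ K →
        K = closure {y : ℤ → Bool | ∃ k : ℤ, (fun n => twoSidedMorse (n + k)) = y}) ∧
    ¬ (closure {y : ℤ → Bool | ∃ k : ℤ, (fun n => twoSidedMorse (n + k)) = y}).Countable := by
  exact ⟨fun K h1 h2 h3 h4 => minimality K h1 h2 h3 h4, uncountable⟩
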